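/- Theorem 1 (Soundness of PoLoc, supremum form). In the PoLoc setup, let f := n − H.card and assume f < n. For each unit vector v ∈ E define ρ(v) to be the (f+1)-th smallest element of the multiset {R(C i, d̂ i, P̃, v) : i ∈ Fin n}. Then dist P P̃ ≤ sSup {ρ(v) : v ∈ E, ‖v‖ = 1}; in particular this set of reals is nonempty and bounded above (each R(C i, d̂ i, P̃, v) is at most d̂ i + ‖C i − P̃‖). -/

import Mathlib

open scoped Classical

/-- The plane. -/
local notation "E" => EuclideanSpace ℝ (Fin 2)

/-- Directional uncertainty `R(C, d̂, P̃, u) = s + sqrt (d̂² − d̃² + s²)`,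
where `d̃ = ‖C − P̃‖` and `s = ⟪C − P̃, u⟫_ℝ`. -/
noncomputable def dirUnc (C Pt : EuclideanSpace ℝ (Fin 2)) (dhat : ℝ)
    (u : EuclideanSpace ℝ (Fin 2)) : ℝ :=
  (inner ℝ (C - Pt) u : ℝ) +
    Real.sqrt (dhat ^ 2 - ‖C - Pt‖ ^ 2 + (inner ℝ (C - Pt) u : ℝ) ^ 2)

/-- The `(k+1)`-th smallest (0-indexed `k`-th) value of a finite family of
reals: the value at position `k` after sorting in nondecreasing order. -/
noncomputable def kthSmallest {n : ℕ} (g : Fin n → ℝ) (k : Fin n) : ℝ :=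
  (g ∘ Tuple.sort g) k

/-- Pointwise upper bound on directional uncertainty for unit directions. -/
lemma dirUnc_le (C Pt : E) (dhat : ℝ) (v : E) (hv : ‖v‖ = 1) :
    dirUnc C Pt dhat v ≤ ‖C - Pt‖ + |dhat| := by
  unfold dirUnc
  set s : ℝ := (inner ℝ (C - Pt) v : ℝ)
  have h1 : s ≤ ‖C - Pt‖ := by
    calc s ≤ ‖C - Pt‖ * ‖v‖ := real_inner_le_norm _ _
    _ = ‖C - Pt‖ := by rw [hv, mul_one]
  have h2 : s ^ 2 ≤ ‖C - Pt‖ ^ 2 := by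
    have := abs_real_inner_le_norm (C - Pt) v
    rw [hv, mul_one] at this
    calc s ^ 2 = |s| ^ 2 := (sq_abs s).symm
    _ ≤ ‖C - Pt‖ ^ 2 := by
        apply pow_le_pow_left₀ (abs_nonneg _) this
  have h3 : Real.sqrt (dhat ^ 2 - ‖C - Pt‖ ^ 2 + s ^ 2) ≤ |dhat| := by
    calc Real.sqrt (dhat ^ 2 - ‖C - Pt‖ ^ 2 + s ^ 2) ≤ Real.sqrt (dhat ^ 2) := by
          apply Real.sqrt_le_sqrt; linarith
    _ = |dhat| := Real.sqrt_sq_eq_abs dhat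
  linarith

/-- Honest challengers give a lower bound on directional uncertainty in the
direction of the true deviation. -/
lemma dist_le_dirUnc (C Pt P : E) (dhat : ℝ) (hne : P ≠ Pt)
    (h : dist C P ≤ dhat) :
    dist P Pt ≤ dirUnc C Pt dhat (‖P - Pt‖⁻¹ • (P - Pt)) := by
  set D : ℝ := ‖P - Pt‖ with hD
  have hD0 : 0 < D := by
    rw [hD, norm_pos_iff]; exact sub_ne_zero.mpr hne
  set u : E := ‖P - Pt‖⁻¹ • (P - Pt) with hu
  have hDu : D • u = P - Pt := by
    rw [hu, smul_smul, mul_inv_cancel₀ (ne_of_gt hD0), one_smul]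
  have hunorm : ‖u‖ = 1 := by
    rw [hu, norm_smul, norm_inv, norm_norm, inv_mul_cancel₀ (ne_of_gt hD0)]
  set s : ℝ := (inner ℝ (C - Pt) u : ℝ) with hs
  have hCP : C - P = (C - Pt) - D • u := by rw [hDu]; abel
  have hDu' : ‖D • u‖ = D := by
    rw [norm_smul, hunorm, mul_one, Real.norm_eq_abs, abs_of_pos hD0]
  have hnorm2 : ‖C - P‖ ^ 2 = ‖C - Pt‖ ^ 2 - 2 * D * s + D ^ 2 := by
    rw [hCP, norm_sub_sq_real, real_inner_smul_right, hDu', ← hs]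
    ring
  have hdistCP : dist C P = ‖C - P‖ := by rw [dist_eq_norm]
  have hle : ‖C - P‖ ^ 2 ≤ dhat ^ 2 := by
    have h0 : (0:ℝ) ≤ ‖C - P‖ := norm_nonneg _
    have : ‖C - P‖ ≤ dhat := hdistCP ▸ h
    nlinarith
  have hquad : (D - s) ^ 2 ≤ dhat ^ 2 - ‖C - Pt‖ ^ 2 + s ^ 2 := by
    nlinarith [hnorm2, hle]
  have hsq : D - s ≤ Real.sqrt (dhat ^ 2 - ‖C - Pt‖ ^ 2 + s ^ 2) := by
    calc D - s ≤ |D - s| := le_abs_self _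
    _ = Real.sqrt ((D - s) ^ 2) := (Real.sqrt_sq_eq_abs _).symm
    _ ≤ _ := Real.sqrt_le_sqrt hquad
  have : dist P Pt = D := by rw [dist_eq_norm]
  rw [this]
  unfold dirUnc
  rw [← hs]
  linarith

/-- If at most `k` indices have value `< a`, then the `k`-th smallest is `≥ a`. -/
lemma le_kthSmallest {n : ℕ} (g : Fin n → ℝ) (k : Fin n) (a : ℝ)
    (h : (Finset.univ.filter (fun i => g i < a)).card ≤ (k : ℕ)) :
    a ≤ kthSmallest g k := by
  by_contra hlt
  push_neg at hlt
  -- every sorted position j ≤ k has value < a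
  have hmono := Tuple.monotone_sort g
  have hsub : (Finset.Iic k).image (Tuple.sort g) ⊆
      Finset.univ.filter (fun i => g i < a) := by
    intro i hi
    simp only [Finset.mem_image, Finset.mem_Iic] at hi
    obtain ⟨j, hj, rfl⟩ := hi
    simp only [Finset.mem_filter, Finset.mem_univ, true_and]
    calc g (Tuple.sort g j) ≤ g (Tuple.sort g k) := hmono hj
    _ < a := hlt
  have hcard : ((Finset.Iic k).image (Tuple.sort g)).card = (k : ℕ) + 1 := by
    rw [Finset.card_image_of_injective _ (Tuple.sort g).injective,
      Fin.card_Iic]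
  have := Finset.card_le_card hsub
  omega

/-- Theorem 1 (Soundness of PoLoc, supremum form): letting `ρ(v)` be the
`(f+1)`-th smallest directional uncertainty in direction `v`, the true
deviation of Waldo is at most `sSup {ρ(v) : ‖v‖ = 1}`; in particular this set
of reals is nonempty and bounded above. -/
theorem poloc_soundness_sup (n : ℕ) (C : Fin n → E) (dhat : Fin n → ℝ)
    (Pt P : E) (hne : P ≠ Pt) (H : Finset (Fin n))
    (hH : ∀ i ∈ H, dist (C i) P ≤ dhat i) (hf : n - H.card < n) :
    let ρ : E → ℝ := fun v =>
      kthSmallest (fun i => dirUnc (C i) Pt (dhat i) v) ⟨n - H.card, hf⟩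
    let S : Set ℝ := {r : ℝ | ∃ v : E, ‖v‖ = 1 ∧ r = ρ v}
    S.Nonempty ∧ BddAbove S ∧ dist P Pt ≤ sSup S := by
  intro ρ S
  have hn : 0 < n := lt_of_le_of_lt (Nat.zero_le _) hf
  have hD0 : (0:ℝ) < ‖P - Pt‖ := by rw [norm_pos_iff]; exact sub_ne_zero.mpr hne
  set u : E := ‖P - Pt‖⁻¹ • (P - Pt) with hu
  have hunorm : ‖u‖ = 1 := by
    rw [hu, norm_smul, norm_inv, norm_norm, inv_mul_cancel₀ (ne_of_gt hD0)]
  have hSne : S.Nonempty := ⟨ρ u, u, hunorm, rfl⟩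
  -- upper bound
  have hne' : (Finset.univ : Finset (Fin n)).Nonempty :=
    Finset.univ_nonempty_iff.mpr (Fin.pos_iff_nonempty.mp hn)
  set B : ℝ := Finset.univ.sup' hne' (fun i => ‖C i - Pt‖ + |dhat i|) with hB
  have hbdd : BddAbove S := by
    refine ⟨B, fun r hr => ?_⟩
    obtain ⟨v, hv, rfl⟩ := hr
    show kthSmallest (fun i => dirUnc (C i) Pt (dhat i) v) _ ≤ B
    unfold kthSmallest
    set j := Tuple.sort (fun i => dirUnc (C i) Pt (dhat i) v) ⟨n - H.card, hf⟩
    have h1 : dirUnc (C j) Pt (dhat j) v ≤ ‖C j - Pt‖ + |dhat j| :=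
      dirUnc_le _ _ _ _ hv
    have h2 : ‖C j - Pt‖ + |dhat j| ≤ B :=
      Finset.le_sup' (fun i => ‖C i - Pt‖ + |dhat i|) (Finset.mem_univ j)
    exact le_trans h1 h2
  refine ⟨hSne, hbdd, ?_⟩
  have hlow : dist P Pt ≤ ρ u := by
    apply le_kthSmallest
    have hsub : Finset.univ.filter
        (fun i => dirUnc (C i) Pt (dhat i) u < dist P Pt) ⊆ Hᶜ := by
      intro i hi
      simp only [Finset.mem_filter, Finset.mem_univ, true_and] at hi
      simp only [Finset.mem_compl]
      intro hiH
      exact absurd (dist_le_dirUnc (C i) Pt P (dhat i) hne (hH i hiH))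
        (not_le.mpr hi)
    calc (Finset.univ.filter _).card ≤ Hᶜ.card := Finset.card_le_card hsub
    _ = n - H.card := by rw [Finset.card_compl, Fintype.card_fin]
  exact hlow.trans (le_csSup hbdd ⟨u, hunorm, rfl⟩)
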